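/- Let f be a non-autonomous dynamical system on a compact metric space (M,d), g a non-autonomous dynamical system on a compact metric space (N,ρ), and i₀ ∈ ℤ. If there exist homeomorphisms h_i : M → N for i ≥ i₀ satisfying h_{i+1} ∘ f_i = g_i ∘ h_i for all i ≥ i₀, such that the families (h_i)_{i≥i₀} and (h_i^{-1})_{i≥i₀} are uniformly equicontinuous, then H_{i₀}(f) = H_{i₀}(g). -/
import Mathlib


open Filter Topology Set

variable {M : Type*} {N : Type*}

/-- The `n`-th composition `f_i^n = f_{i+n-1} ∘ ⋯ ∘ f_i` of a non-autonomous
dynamical system `f = (f_i)_{i ∈ ℤ}` of homeomorphisms of `M`. -/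
def nsIter [TopologicalSpace M] (f : ℤ → M ≃ₜ M) (i : ℤ) : ℕ → M → M
  | 0 => id
  | n + 1 => (f (i + n)) ∘ nsIter f i n

/-- `K` is an `(n, ε)`-spanning set for `f` at time `i`. -/
def IsSpanningSet [PseudoMetricSpace M] (f : ℤ → M ≃ₜ M) (i : ℤ) (n : ℕ) (ε : ℝ)
    (K : Set M) : Prop :=
  ∀ x : M, ∃ y ∈ K, ∀ j < n, dist (nsIter f i j x) (nsIter f i j y) < ε

/-- `E` is an `(n, ε)`-separated set for `f` at time `i`. -/
def IsSeparatedSet [PseudoMetricSpace M] (f : ℤ → M ≃ₜ M) (i : ℤ) (n : ℕ) (ε : ℝ)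
    (E : Set M) : Prop :=
  ∀ x ∈ E, ∀ y ∈ E, x ≠ y → ∃ j < n, ε < dist (nsIter f i j x) (nsIter f i j y)

/-- `r[n,i](ε,f)`: the smallest cardinality of a finite `(n, ε)`-spanning set at time `i`. -/
noncomputable def rSpan [PseudoMetricSpace M] (f : ℤ → M ≃ₜ M) (i : ℤ) (n : ℕ) (ε : ℝ) : ℕ :=
  sInf {k | ∃ K : Finset M, K.card = k ∧ IsSpanningSet f i n ε ↑K}

/-- `s[n,i](ε,f)`: the largest cardinality of an `(n, ε)`-separated set at time `i`. -/
noncomputable def sSep [PseudoMetricSpace M] (f : ℤ → M ≃ₜ M) (i : ℤ) (n : ℕ) (ε : ℝ) : ℕ :=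
  sSup {k | ∃ E : Finset M, E.card = k ∧ IsSeparatedSet f i n ε ↑E}

/-- `r[i](ε,f) = limsup_{n → ∞} (1/n) log r[n,i](ε,f)`. -/
noncomputable def rGrowth [PseudoMetricSpace M] (f : ℤ → M ≃ₜ M) (i : ℤ) (ε : ℝ) : EReal :=
  Filter.atTop.limsup fun n : ℕ => ((Real.log (rSpan f i n ε) / n : ℝ) : EReal)

/-- `s[i](ε,f) = limsup_{n → ∞} (1/n) log s[n,i](ε,f)`. -/
noncomputable def sGrowth [PseudoMetricSpace M] (f : ℤ → M ≃ₜ M) (i : ℤ) (ε : ℝ) : EReal :=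
  Filter.atTop.limsup fun n : ℕ => ((Real.log (sSep f i n ε) / n : ℝ) : EReal)

/-- The topological entropy `H_i(f) = lim_{ε → 0⁺} r[i](ε,f)`; since `ε ↦ r[i](ε,f)` is
antitone, this one-sided limit equals the supremum over `ε > 0`. -/
noncomputable def nsEntropy [PseudoMetricSpace M] (f : ℤ → M ≃ₜ M) (i : ℤ) : EReal :=
  ⨆ (ε : ℝ) (_ : 0 < ε), rGrowth f i ε

lemma nsIter_continuous [TopologicalSpace M] (f : ℤ → M ≃ₜ M) (i : ℤ) (n : ℕ) :
    Continuous (nsIter f i n) := by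
  induction n with
  | zero => exact continuous_id
  | succ n ih => exact (f (i + n)).continuous.comp ih

lemma exists_spanning [MetricSpace M] [CompactSpace M] (f : ℤ → M ≃ₜ M) (i : ℤ)
    (n : ℕ) {ε : ℝ} (hε : 0 < ε) : ∃ K : Finset M, IsSpanningSet f i n ε ↑K := by
  obtain ⟨t, ht⟩ := IsCompact.elim_finite_subcover (isCompact_univ (X := M))
    (fun y : M => ⋂ j ∈ Finset.range n, (nsIter f i j) ⁻¹' Metric.ball (nsIter f i j y) ε)
    (fun y => isOpen_biInter_finset fun j _ =>
      (Metric.isOpen_ball).preimage (nsIter_continuous f i j))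
    (fun x _ => Set.mem_iUnion.mpr ⟨x, Set.mem_iInter₂.mpr fun j _ => Metric.mem_ball_self hε⟩)
  refine ⟨t, fun x => ?_⟩
  obtain ⟨y, hy, hx⟩ := Set.mem_iUnion₂.mp (ht (Set.mem_univ x))
  exact ⟨y, hy, fun j hj => Set.mem_iInter₂.mp hx j (Finset.mem_range.mpr hj)⟩

lemma nsIter_conj [TopologicalSpace M] [TopologicalSpace N] (f : ℤ → M ≃ₜ M)
    (g : ℤ → N ≃ₜ N) (i₀ : ℤ) (h : ℤ → M ≃ₜ N)
    (hconj : ∀ i : ℤ, i₀ ≤ i → ∀ x : M, h (i + 1) (f i x) = g i (h i x)) (n : ℕ) (x : M) :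
    nsIter g i₀ n (h i₀ x) = h (i₀ + n) (nsIter f i₀ n x) := by
  induction n with
  | zero => simp [nsIter]
  | succ n ih =>
    have hc : (i₀ : ℤ) + (n + 1 : ℕ) = (i₀ + n) + 1 := by push_cast; ring
    rw [nsIter, nsIter, Function.comp_apply, Function.comp_apply, ih, hc,
      hconj (i₀ + n) (le_add_of_nonneg_right (Int.natCast_nonneg n))]

lemma rSpan_le_conj [MetricSpace M] [CompactSpace M] [MetricSpace N] [CompactSpace N]
    (f : ℤ → M ≃ₜ M) (g : ℤ → N ≃ₜ N) (i₀ : ℤ) (h : ℤ → M ≃ₜ N)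
    (hconj : ∀ i : ℤ, i₀ ≤ i → ∀ x : M, h (i + 1) (f i x) = g i (h i x))
    {ε δ : ℝ} (hδ : 0 < δ)
    (hd : ∀ i : ℤ, i₀ ≤ i → ∀ x y : M, dist x y < δ → dist (h i x) (h i y) < ε)
    (n : ℕ) : rSpan g i₀ n ε ≤ rSpan f i₀ n δ := by
  obtain ⟨K₀, hK₀⟩ := exists_spanning f i₀ n hδ
  have hmem : rSpan f i₀ n δ ∈ {k | ∃ K : Finset M, K.card = k ∧ IsSpanningSet f i₀ n δ ↑K} :=
    Nat.sInf_mem ⟨K₀.card, K₀, rfl, hK₀⟩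
  obtain ⟨K, hKcard, hKspan⟩ := hmem
  classical
  have hspan : IsSpanningSet g i₀ n ε ↑(K.image (h i₀)) := by
    intro u
    obtain ⟨y, hy, hxy⟩ := hKspan ((h i₀).symm u)
    refine ⟨h i₀ y, Finset.mem_coe.mpr (Finset.mem_image_of_mem _ hy), fun j hj => ?_⟩
    have hu : u = h i₀ ((h i₀).symm u) := ((h i₀).apply_symm_apply u).symm
    rw [hu, nsIter_conj f g i₀ h hconj j, nsIter_conj f g i₀ h hconj j]
    exact hd (i₀ + j) (le_add_of_nonneg_right (Int.natCast_nonneg j)) _ _ (hxy j hj)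
  calc rSpan g i₀ n ε ≤ (K.image (h i₀)).card :=
        Nat.sInf_le ⟨K.image (h i₀), rfl, hspan⟩
    _ ≤ K.card := Finset.card_image_le
    _ = rSpan f i₀ n δ := hKcard

lemma nsEntropy_le_of_conj [MetricSpace M] [CompactSpace M] [MetricSpace N] [CompactSpace N]
    (f : ℤ → M ≃ₜ M) (g : ℤ → N ≃ₜ N) (i₀ : ℤ) (h : ℤ → M ≃ₜ N)
    (hconj : ∀ i : ℤ, i₀ ≤ i → ∀ x : M, h (i + 1) (f i x) = g i (h i x))
    (hequi : ∀ ε > (0 : ℝ), ∃ δ > (0 : ℝ), ∀ i : ℤ, i₀ ≤ i → ∀ x y : M,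
      dist x y < δ → dist (h i x) (h i y) < ε) :
    nsEntropy g i₀ ≤ nsEntropy f i₀ := by
  refine iSup₂_le fun ε hε => ?_
  obtain ⟨δ, hδpos, hδ⟩ := hequi ε hε
  have hrg : rGrowth g i₀ ε ≤ rGrowth f i₀ δ := by
    refine Filter.limsup_le_limsup (Filter.Eventually.of_forall fun n => ?_)
    have hle : rSpan g i₀ n ε ≤ rSpan f i₀ n δ := rSpan_le_conj f g i₀ h hconj hδpos hδ n
    have hlog : Real.log (rSpan g i₀ n ε) ≤ Real.log (rSpan f i₀ n δ) := by
      rcases Nat.eq_zero_or_pos (rSpan g i₀ n ε) with h0 | hpos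
      · rw [h0]
        simp only [Nat.cast_zero, Real.log_zero]
        rcases Nat.eq_zero_or_pos (rSpan f i₀ n δ) with h1 | h1
        · simp [h1]
        · exact Real.log_nonneg (by exact_mod_cast h1)
      · exact Real.log_le_log (by exact_mod_cast hpos) (by exact_mod_cast hle)
    apply EReal.coe_le_coe_iff.mpr
    rcases Nat.eq_zero_or_pos n with hn | hn
    · simp [hn]
    · have hn' : (0 : ℝ) < n := by exact_mod_cast hn
      gcongr
  exact hrg.trans (le_iSup₂ (f := fun (δ : ℝ) (_ : 0 < δ) => rGrowth f i₀ δ) δ hδpos)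

/-- if there are homeomorphisms `h_i : M → N` for `i ≥ i₀` with
`h_{i+1} ∘ f_i = g_i ∘ h_i` for all `i ≥ i₀`, such that `(h_i)_{i ≥ i₀}` and
`(h_i⁻¹)_{i ≥ i₀}` are uniformly equicontinuous, then `H_{i₀}(f) = H_{i₀}(g)`. -/
theorem nsEntropy_eq_of_posUniformConjugacy [MetricSpace M] [CompactSpace M]
    [MetricSpace N] [CompactSpace N]
    (f : ℤ → M ≃ₜ M) (g : ℤ → N ≃ₜ N) (i₀ : ℤ) (h : ℤ → M ≃ₜ N)
    (hconj : ∀ i : ℤ, i₀ ≤ i → ∀ x : M, h (i + 1) (f i x) = g i (h i x))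
    (hequi : ∀ ε > (0 : ℝ), ∃ δ > (0 : ℝ), ∀ i : ℤ, i₀ ≤ i → ∀ x y : M,
      dist x y < δ → dist (h i x) (h i y) < ε)
    (hequi' : ∀ ε > (0 : ℝ), ∃ δ > (0 : ℝ), ∀ i : ℤ, i₀ ≤ i → ∀ u v : N,
      dist u v < δ → dist ((h i).symm u) ((h i).symm v) < ε) :
    nsEntropy f i₀ = nsEntropy g i₀ := by
  refine le_antisymm ?_ (nsEntropy_le_of_conj f g i₀ h hconj hequi)
  refine nsEntropy_le_of_conj g f i₀ (fun i => (h i).symm) ?_ hequi'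
  intro i hi u
  have hc := hconj i hi ((h i).symm u)
  rw [Homeomorph.apply_symm_apply] at hc
  simp only [← hc, Homeomorph.symm_apply_apply]
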